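/- arXiv:1908.05093 — 5 statements merged into one kernel-verified Lean document; each statement's English description precedes it below -/
import Mathlib

section
/- Let g ∈ 𝕊 be a nonzero split quaternion. The real system of linear equations x g = 0 in x ∈ 𝕊 has a nontrivial solution if and only if g ḡ = 0, and in that case the solution space {x ∈ 𝕊 : x g = 0} is a real vector space of dimension 2. -/
notation "𝕊" => QuaternionAlgebra ℝ (-1) 0 1

lemma sq_mulStar (q : 𝕊) : q * star q = ((q.re^2 + q.imI^2 - q.imJ^2 - q.imK^2 : ℝ) : 𝕊) := by
  ext <;> simp [← QuaternionAlgebra.coe_pow] <;> ring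

lemma sq_starMul (q : 𝕊) : star q * q = q * star q := by
  ext <;> simp <;> ring

lemma sq_cancel (s t : ℝ) (q : 𝕊) (hq : q ≠ 0) (h : (⟨s,t,0,0⟩ : 𝕊) * q = 0) : s = 0 ∧ t = 0 := by
  by_contra hc
  have hst : s^2 + t^2 > 0 := by
    rcases not_and_or.mp hc with h' | h' <;> positivity
  have hne : s^2 + t^2 ≠ 0 := ne_of_gt hst
  have h1 := congrArg QuaternionAlgebra.re h
  have h2 := congrArg QuaternionAlgebra.imI h
  have h3 := congrArg QuaternionAlgebra.imJ h
  have h4 := congrArg QuaternionAlgebra.imK h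
  simp at h1 h2 h3 h4
  apply hq
  ext
  · exact (mul_eq_zero.mp (by linear_combination s*h1 + t*h2 : (s^2+t^2) * q.re = 0)).resolve_left hne
  · exact (mul_eq_zero.mp (by linear_combination s*h2 - t*h1 : (s^2+t^2) * q.imI = 0)).resolve_left hne
  · exact (mul_eq_zero.mp (by linear_combination s*h3 + t*h4 : (s^2+t^2) * q.imJ = 0)).resolve_left hne
  · exact (mul_eq_zero.mp (by linear_combination s*h4 - t*h3 : (s^2+t^2) * q.imK = 0)).resolve_left hne

lemma sq_pair_indep (q : 𝕊) (hq : q ≠ 0) :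
    LinearIndependent ℝ ![q, (⟨0,1,0,0⟩ : 𝕊) * q] := by
  rw [LinearIndependent.pair_iff]
  intro s t hst
  have : (⟨s,t,0,0⟩ : 𝕊) * q = 0 := by
    rw [← hst]; ext <;> simp
  exact sq_cancel s t q hq this

lemma sq_span_le_finrank {p : Submodule ℝ 𝕊} (u v : 𝕊) (hu : u ∈ p) (hv : v ∈ p)
    (hi : LinearIndependent ℝ ![u, v]) : 2 ≤ Module.finrank ℝ p := by
  have h1 : Submodule.span ℝ (Set.range ![u, v]) ≤ p := by
    rw [Submodule.span_le]
    rintro x ⟨i, rfl⟩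
    fin_cases i <;> simpa using ‹_›
  calc 2 = Module.finrank ℝ (Submodule.span ℝ (Set.range ![u, v])) := by
            rw [finrank_span_eq_card hi]; simp
    _ ≤ Module.finrank ℝ p := Submodule.finrank_mono h1

/-- For a nonzero split quaternion `g`, the linear system `x g = 0` has a
nontrivial solution iff `g ḡ = 0`, in which case the solution space has real
dimension `2`. -/
theorem solutions_of_xg_eq_zero (g : 𝕊) (hg : g ≠ 0) :
    ((∃ x : 𝕊, x ≠ 0 ∧ x * g = 0) ↔ g * star g = 0) ∧
    (g * star g = 0 →
      Module.finrank ℝ (LinearMap.ker (LinearMap.mulRight ℝ g)) = 2) := by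
  constructor
  · constructor
    · rintro ⟨x, hx, hxg⟩
      have h0 : x * (g * star g) = 0 := by rw [← mul_assoc, hxg, zero_mul]
      rw [sq_mulStar, QuaternionAlgebra.mul_coe_eq_smul, smul_eq_zero] at h0
      rw [sq_mulStar]
      rcases h0 with h0 | h0
      · rw [h0]; exact QuaternionAlgebra.coe_zero
      · exact absurd h0 hx
    · intro h
      refine ⟨star g, by simpa using hg, by rw [sq_starMul, h]⟩
  · intro h
    have hstar : star g * g = 0 := by rw [sq_starMul, h]
    set f := LinearMap.mulRight ℝ g with hf
    have hrange : 2 ≤ Module.finrank ℝ (LinearMap.range f) := by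
      apply sq_span_le_finrank g ((⟨0,1,0,0⟩ : 𝕊) * g)
      · exact ⟨1, one_mul g⟩
      · exact ⟨(⟨0,1,0,0⟩ : 𝕊), rfl⟩
      · exact sq_pair_indep g hg
    have hker : 2 ≤ Module.finrank ℝ (LinearMap.ker f) := by
      apply sq_span_le_finrank (star g) ((⟨0,1,0,0⟩ : 𝕊) * star g)
      · exact hstar
      · show (⟨0,1,0,0⟩ : 𝕊) * star g * g = 0
        rw [mul_assoc, hstar, mul_zero]
      · exact sq_pair_indep (star g) (by simpa using hg)
    have hrn := LinearMap.finrank_range_add_finrank_ker f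
    rw [QuaternionAlgebra.finrank_eq_four] at hrn
    omega
end

section
/- Let h, g be nonzero split quaternions with h h̄ = 0, g ḡ = 0, g h̄ = 0 and h ḡ = 0 (so [h]∨[g] lies on a left ruling). Then the set of solutions x ∈ 𝕊 of x h = g is exactly { u + λ h̄ + μ i h̄ : λ, μ ∈ ℝ } where u = (g₀ + g₁ i)(h₀ + h₁ i)⁻¹. -/
set_option maxHeartbeats 2000000 in
open QuaternionAlgebra in
/-- If `[h] ∨ [g]` lies on a left ruling of the null quadric, the affine
two-plane of solutions of `x h = g` is `u + λ h̄ + μ i h̄` with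
`u = (g₀ + g₁ i)(h₀ + h₁ i)⁻¹`. -/
theorem affine_two_plane_of_solutions (h g : 𝕊) (h0 : h ≠ 0) (g0 : g ≠ 0)
    (hn : h * star h = 0) (gn : g * star g = 0)
    (hg : g * star h = 0) (gh : h * star g = 0) :
    {x : 𝕊 | x * h = g} =
      {x : 𝕊 | ∃ lam mu : ℝ,
        x = (⟨g.re, g.imI, 0, 0⟩ : 𝕊) * Ring.inverse (⟨h.re, h.imI, 0, 0⟩ : 𝕊)
            + lam • star h + mu • ((⟨0, 1, 0, 0⟩ : 𝕊) * star h)} := by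
  obtain ⟨a,b,c,d⟩ := h
  obtain ⟨p,q,r,s⟩ := g
  simp only [star_mk, mk_mul_mk, QuaternionAlgebra.ext_iff, re_zero, imI_zero, imJ_zero,
    imK_zero] at hn gh
  obtain ⟨N,-,-,-⟩ := hn
  obtain ⟨A1,A2,A3,A4⟩ := gh
  ring_nf at N A1 A2 A3 A4
  have hab : a^2+b^2 ≠ 0 := by
    intro hz
    apply h0
    have ha : a = 0 := by nlinarith [sq_nonneg a, sq_nonneg b]
    have hb : b = 0 := by nlinarith [sq_nonneg a, sq_nonneg b]
    have hc : c = 0 := by nlinarith [sq_nonneg c, sq_nonneg d]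
    have hd : d = 0 := by nlinarith [sq_nonneg c, sq_nonneg d]
    simp [QuaternionAlgebra.ext_iff, ha, hb, hc, hd]
  have hinv : Ring.inverse (⟨a,b,0,0⟩ : 𝕊) = (⟨a/(a^2+b^2), -b/(a^2+b^2), 0, 0⟩ : 𝕊) := by
    have h1 : (⟨a,b,0,0⟩ : 𝕊) * ⟨a/(a^2+b^2),-b/(a^2+b^2),0,0⟩ = 1 := by
      rw [mk_mul_mk, QuaternionAlgebra.ext_iff]
      simp only [re_one, imI_one, imJ_one, imK_one]
      refine ⟨?_, ?_, ?_, ?_⟩ <;> field_simp <;> ring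
    have h2 : (⟨a/(a^2+b^2),-b/(a^2+b^2),0,0⟩ : 𝕊) * ⟨a,b,0,0⟩ = 1 := by
      rw [mk_mul_mk, QuaternionAlgebra.ext_iff]
      simp only [re_one, imI_one, imJ_one, imK_one]
      refine ⟨?_, ?_, ?_, ?_⟩ <;> field_simp <;> ring
    exact Ring.inverse_unit ⟨_, _, h1, h2⟩
  have huh : (⟨(p*a+q*b)/(a^2+b^2), (q*a-p*b)/(a^2+b^2), 0, 0⟩ : 𝕊) * ⟨a,b,c,d⟩
      = ⟨p,q,r,s⟩ := by
    rw [mk_mul_mk, QuaternionAlgebra.ext_iff]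
    refine ⟨?_, ?_, ?_, ?_⟩ <;> simp only <;> field_simp
    · ring
    · ring
    · linear_combination a*A3 + b*A4
    · linear_combination a*A4 - b*A3
  have hsh : star (⟨a,b,c,d⟩ : 𝕊) * ⟨a,b,c,d⟩ = 0 := by
    rw [star_mk, mk_mul_mk, QuaternionAlgebra.ext_iff]
    simp only [re_zero, imI_zero, imJ_zero, imK_zero]
    refine ⟨by linear_combination N, by ring, by ring, by ring⟩
  have hu : (⟨p,q,0,0⟩ : 𝕊) * ⟨a/(a^2+b^2), -b/(a^2+b^2), 0, 0⟩
      = ⟨(p*a+q*b)/(a^2+b^2), (q*a-p*b)/(a^2+b^2), 0, 0⟩ := by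
    rw [mk_mul_mk, QuaternionAlgebra.ext_iff]
    refine ⟨?_, ?_, ?_, ?_⟩ <;> simp only <;> field_simp <;> ring
  ext x
  obtain ⟨x0,x1,x2,x3⟩ := x
  simp only [Set.mem_setOf_eq]
  rw [hinv, hu]
  constructor
  · intro hx
    rw [mk_mul_mk, QuaternionAlgebra.ext_iff] at hx
    obtain ⟨E1,E2,E3,E4⟩ := hx
    have K3 : (x0*(a^2+b^2) - (p*a+q*b))*c - (x1*(a^2+b^2) - (q*a-p*b))*d
        + (x2*a + x3*b)*(a^2+b^2) = 0 := by
      linear_combination (a^2+b^2)*E3 - a*A3 - b*A4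
    have K4 : (x0*(a^2+b^2) - (p*a+q*b))*d + (x1*(a^2+b^2) - (q*a-p*b))*c
        + (-(x2*b) + x3*a)*(a^2+b^2) = 0 := by
      linear_combination (a^2+b^2)*E4 - a*A4 + b*A3
    refine ⟨((x0*(a^2+b^2) - (p*a+q*b))*a - (x1*(a^2+b^2) - (q*a-p*b))*b)/(a^2+b^2)^2,
            ((x1*(a^2+b^2) - (q*a-p*b))*a + (x0*(a^2+b^2) - (p*a+q*b))*b)/(a^2+b^2)^2, ?_⟩
    rw [star_mk, mk_mul_mk, smul_mk, smul_mk, mk_add_mk, mk_add_mk, QuaternionAlgebra.ext_iff]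
    refine ⟨?_, ?_, ?_, ?_⟩ <;> simp only [smul_eq_mul] <;> field_simp
    · ring
    · ring
    · linear_combination a*K3 - b*K4
    · linear_combination a*K4 + b*K3
  · rintro ⟨lam, mu, hx⟩
    rw [hx, add_mul, add_mul, smul_mul_assoc, smul_mul_assoc, mul_assoc, hsh, mul_zero,
      smul_zero, smul_zero, add_zero, add_zero, huh]
end

section
/- For c₀ ∈ ℝ, the set of split quaternion right zeros of P = t² + c₀ is {x ∈ 𝕊 : Re(x) = 0 and x x̄ = c₀} together with, in case c₀ ≤ 0, the two real zeros ±√(-c₀). In particular P always has infinitely many split quaternion zeros. -/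
/-- The right zeros of `t² + c₀` (`c₀ ∈ ℝ`) are the vectorial split quaternions
of norm `c₀` together with, when `c₀ ≤ 0`, the two real zeros `±√(-c₀)`.
In particular the zero set is always infinite. -/
theorem zeros_of_t_sq_add_real (c₀ : ℝ) :
    ({x : 𝕊 | x ^ 2 + (c₀ : 𝕊) = 0} =
      {x : 𝕊 | x.re = 0 ∧ x * star x = (c₀ : 𝕊)} ∪
      {x : 𝕊 | c₀ ≤ 0 ∧ (x = ((Real.sqrt (-c₀) : ℝ) : 𝕊) ∨
        x = -((Real.sqrt (-c₀) : ℝ) : 𝕊))}) ∧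
    {x : 𝕊 | x ^ 2 + (c₀ : 𝕊) = 0}.Infinite := by
  constructor
  · ext ⟨r, a, b, c⟩
    simp only [Set.mem_setOf_eq, Set.mem_union, QuaternionAlgebra.ext_iff, pow_two,
      QuaternionAlgebra.re_add, QuaternionAlgebra.imI_add, QuaternionAlgebra.imJ_add,
      QuaternionAlgebra.imK_add, QuaternionAlgebra.re_mul, QuaternionAlgebra.imI_mul,
      QuaternionAlgebra.imJ_mul, QuaternionAlgebra.imK_mul, QuaternionAlgebra.re_coe,
      QuaternionAlgebra.imI_coe, QuaternionAlgebra.imJ_coe, QuaternionAlgebra.imK_coe,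
      QuaternionAlgebra.re_zero, QuaternionAlgebra.imI_zero, QuaternionAlgebra.imJ_zero,
      QuaternionAlgebra.imK_zero, QuaternionAlgebra.re_star, QuaternionAlgebra.imI_star,
      QuaternionAlgebra.imJ_star, QuaternionAlgebra.imK_star, QuaternionAlgebra.re_neg,
      QuaternionAlgebra.imI_neg, QuaternionAlgebra.imJ_neg, QuaternionAlgebra.imK_neg, zero_mul, mul_zero, add_zero, sub_zero]
    constructor
    · rintro ⟨h1, h2, h3, h4⟩
      rcases eq_or_ne r 0 with hr | hr
      · left
        refine ⟨hr, ?_, by nlinarith, by nlinarith, by nlinarith⟩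
        subst hr; nlinarith
      · have ha : a = 0 := by
          have h2' : r * a = 0 := by linarith
          rcases mul_eq_zero.mp h2' with h | h
          exacts [absurd h hr, h]
        have hb : b = 0 := by
          have h3' : r * b = 0 := by linarith
          rcases mul_eq_zero.mp h3' with h | h
          exacts [absurd h hr, h]
        have hc : c = 0 := by
          have h4' : r * c = 0 := by linarith
          rcases mul_eq_zero.mp h4' with h | h
          exacts [absurd h hr, h]
        subst ha hb hc
        have hc0 : c₀ = -(r * r) := by nlinarith
        have hle : c₀ ≤ 0 := by nlinarith
        right
        refine ⟨hle, ?_⟩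
        have hsq : Real.sqrt (-c₀) = |r| := by
          rw [hc0, neg_neg, ← Real.sqrt_sq_eq_abs]; ring_nf
        rcases le_or_gt 0 r with h | h
        · left; exact ⟨by rw [hsq, abs_of_nonneg h], rfl, rfl, rfl⟩
        · right
          exact ⟨by rw [hsq, abs_of_neg h]; ring, by simp, by simp, by simp⟩
    · rintro (⟨h1, h2, h3, h4, h5⟩ | ⟨hle, h | h⟩)
      · subst h1; refine ⟨by nlinarith, by ring, by ring, by ring⟩
      · obtain ⟨h1, h2, h3, h4⟩ := h
        subst h1 h2 h3 h4
        have : Real.sqrt (-c₀) * Real.sqrt (-c₀) = -c₀ :=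
          Real.mul_self_sqrt (by linarith)
        exact ⟨by nlinarith, by ring, by ring, by ring⟩
      · obtain ⟨h1, h2, h3, h4⟩ := h
        subst h1 h2 h3 h4
        have : Real.sqrt (-c₀) * Real.sqrt (-c₀) = -c₀ :=
          Real.mul_self_sqrt (by linarith)
        exact ⟨by nlinarith, by ring, by ring, by ring⟩
  · apply Set.infinite_of_injective_forall_mem
      (f := fun t : ℝ => (⟨0, (Real.exp t + c₀ * Real.exp (-t)) / 2,
        (Real.exp t - c₀ * Real.exp (-t)) / 2, 0⟩ : 𝕊))
    case hi =>
      intro s t hst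
      have h := congrArg QuaternionAlgebra.imI hst
      have h' := congrArg QuaternionAlgebra.imJ hst
      simp only at h h'
      have : Real.exp s = Real.exp t := by linarith
      exact Real.exp_injective this
    case hf =>
      intro t
      have he : Real.exp t * Real.exp (-t) = 1 := by
        rw [← Real.exp_add]; simp
      simp only [Set.mem_setOf_eq, QuaternionAlgebra.ext_iff, pow_two,
        QuaternionAlgebra.re_add, QuaternionAlgebra.imI_add, QuaternionAlgebra.imJ_add,
        QuaternionAlgebra.imK_add, QuaternionAlgebra.re_mul, QuaternionAlgebra.imI_mul,
        QuaternionAlgebra.imJ_mul, QuaternionAlgebra.imK_mul, QuaternionAlgebra.re_coe,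
        QuaternionAlgebra.imI_coe, QuaternionAlgebra.imJ_coe, QuaternionAlgebra.imK_coe,
        QuaternionAlgebra.re_zero, QuaternionAlgebra.imI_zero, QuaternionAlgebra.imJ_zero,
        QuaternionAlgebra.imK_zero]
      refine ⟨by linear_combination (-c₀) * he, by ring, by ring, by ring⟩
end

section
/- Let c ∈ 𝕊 ∖ ℝ be a non-real split quaternion. The polynomial P = t² + c has a split quaternion right zero (equivalently admits a factorization into monic linear factors) if and only if Im(c) · conj(Im(c)) > 0, or (c c̄ ≥ 0 and Re(c) < 0). -/
/-- For non-real `c`, the polynomial `t² + c` has a split quaternion right zero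
iff `Im(c) conj(Im(c)) > 0`, or `c c̄ ≥ 0` and `Re(c) < 0`. -/
theorem factor_t_sq_add_c (c : 𝕊) (hc : c ∉ Set.range (algebraMap ℝ 𝕊)) :
    (∃ x : 𝕊, x ^ 2 + c = 0) ↔
      (c.imI ^ 2 - c.imJ ^ 2 - c.imK ^ 2 > 0 ∨
        (c.re ^ 2 + c.imI ^ 2 - c.imJ ^ 2 - c.imK ^ 2 ≥ 0 ∧ c.re < 0)) := by
  have him : ¬(c.imI = 0 ∧ c.imJ = 0 ∧ c.imK = 0) := by
    rintro ⟨h1, h2, h3⟩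
    exact hc ⟨c.re, by rw [QuaternionAlgebra.algebraMap_eq]; ext <;> simp [h1, h2, h3]⟩
  constructor
  · rintro ⟨x, hx⟩
    rw [QuaternionAlgebra.ext_iff] at hx
    obtain ⟨h0, h1, h2, h3⟩ := hx
    simp only [pow_two, QuaternionAlgebra.re_add, QuaternionAlgebra.imI_add,
      QuaternionAlgebra.imJ_add, QuaternionAlgebra.imK_add, QuaternionAlgebra.re_mul,
      QuaternionAlgebra.imI_mul, QuaternionAlgebra.imJ_mul, QuaternionAlgebra.imK_mul,
      QuaternionAlgebra.re_zero, QuaternionAlgebra.imI_zero, QuaternionAlgebra.imJ_zero,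
      QuaternionAlgebra.imK_zero] at h0 h1 h2 h3
    have hx0 : x.re ≠ 0 := by
      rintro h
      rw [h] at h1 h2 h3
      exact him ⟨by linear_combination h1, by linear_combination h2, by linear_combination h3⟩
    have e1 : c.imI = -2 * x.re * x.imI := by linear_combination h1
    have e2 : c.imJ = -2 * x.re * x.imJ := by linear_combination h2
    have e3 : c.imK = -2 * x.re * x.imK := by linear_combination h3
    have hx2 : x.re ^ 2 > 0 := by positivity
    have key : c.imI ^ 2 - c.imJ ^ 2 - c.imK ^ 2 = 4 * x.re ^ 2 * (x.re ^ 2 + c.re) := by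
      rw [e1, e2, e3]; linear_combination (-4 * x.re ^ 2) * h0
    by_cases hre : c.re < 0
    · exact Or.inr ⟨by nlinarith [sq_nonneg (c.re + 2 * x.re ^ 2)], hre⟩
    · push_neg at hre
      left
      rw [key]
      have : 0 < x.re ^ 2 + c.re := by linarith
      positivity
  · rintro h
    set n := c.imI ^ 2 - c.imJ ^ 2 - c.imK ^ 2 with hn
    have hD : c.re ^ 2 + n ≥ 0 := by rcases h with h | ⟨h, _⟩ <;> nlinarith
    set D := c.re ^ 2 + n with hDdef
    have hsD : Real.sqrt D ^ 2 = D := Real.sq_sqrt hD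
    set y := (-c.re + Real.sqrt D) / 2 with hy
    have h2y : 2 * y + c.re = Real.sqrt D := by rw [hy]; ring
    have hypos : y > 0 := by
      rcases h with h | ⟨_, h⟩
      · have hlt : c.re < Real.sqrt D := by nlinarith [Real.sqrt_nonneg D]
        linarith
      · have := Real.sqrt_nonneg D
        rw [hy]; linarith
    have hkey : 4 * y ^ 2 + 4 * c.re * y - n = 0 := by
      linear_combination (2 * y + c.re + Real.sqrt D) * h2y + hsD
    set s := Real.sqrt y with hsdef
    have hs : s ^ 2 = y := Real.sq_sqrt hypos.le
    have hspos : s > 0 := Real.sqrt_pos.mpr hypos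
    refine ⟨⟨s, -c.imI / (2 * s), -c.imJ / (2 * s), -c.imK / (2 * s)⟩, ?_⟩
    have hs2 : s * s = y := by nlinarith [hs]
    ext <;>
      simp only [pow_two, QuaternionAlgebra.re_add, QuaternionAlgebra.imI_add,
        QuaternionAlgebra.imJ_add, QuaternionAlgebra.imK_add, QuaternionAlgebra.re_mul,
        QuaternionAlgebra.imI_mul, QuaternionAlgebra.imJ_mul, QuaternionAlgebra.imK_mul,
        QuaternionAlgebra.re_zero, QuaternionAlgebra.imI_zero, QuaternionAlgebra.imJ_zero,
        QuaternionAlgebra.imK_zero] <;>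
      field_simp
    · linear_combination hkey + (4 * (s ^ 2 + y) + 4 * c.re) * hs
    · ring
    · ring
    · ring
end

section
/- Let b ∈ 𝕊 be a non-real split quaternion with Re(b) = 0 and b b̄ > 0, and let λ, μ ∈ ℝ. Then the polynomial P = t² + b t + λ + μ b has a split quaternion right zero. -/
lemma zero_exists_aux (b : 𝕊) (hb0 : b.re = 0) (lam mu α β : ℝ)
    (h1 : α^2 = (b.imI^2 - b.imJ^2 - b.imK^2)*β^2 + (b.imI^2 - b.imJ^2 - b.imK^2)*β - lam)
    (h2 : α*(2*β+1) = -mu) :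
    (⟨α, β*b.imI, β*b.imJ, β*b.imK⟩ : 𝕊)^2 + b * ⟨α, β*b.imI, β*b.imJ, β*b.imK⟩ + (lam : 𝕊) + (mu : 𝕊) * b = 0 := by
  ext <;> simp [pow_two, QuaternionAlgebra.re_mul, QuaternionAlgebra.imI_mul,
    QuaternionAlgebra.imJ_mul, QuaternionAlgebra.imK_mul, hb0]
  · linear_combination h1
  · linear_combination b.imI * h2
  · linear_combination b.imJ * h2
  · linear_combination b.imK * h2

/-- If `b` is non-real, vectorial and of positive norm, then
`t² + b t + λ + μ b` has a split quaternion right zero. -/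
theorem zero_exists_of_pos_norm (b : 𝕊) (hb : b ∉ Set.range (algebraMap ℝ 𝕊))
    (hb0 : b.re = 0) (hpos : b.imI ^ 2 - b.imJ ^ 2 - b.imK ^ 2 > 0)
    (lam mu : ℝ) :
    ∃ x : 𝕊, x ^ 2 + b * x + (lam : 𝕊) + (mu : 𝕊) * b = 0 := by
  obtain ⟨n, hn⟩ : ∃ n : ℝ, n = b.imI ^ 2 - b.imJ ^ 2 - b.imK ^ 2 := ⟨_, rfl⟩
  rw [← hn] at hpos
  suffices h : ∃ α β : ℝ, α^2 = n*β^2 + n*β - lam ∧ α*(2*β+1) = -mu by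
    obtain ⟨α, β, h1, h2⟩ := h
    rw [hn] at h1
    exact ⟨_, zero_exists_aux b hb0 lam mu α β h1 h2⟩
  by_cases hmu : mu = 0
  · subst hmu
    by_cases hlam : -n/4 ≤ lam
    · refine ⟨0, (-n + Real.sqrt (n^2 + 4*n*lam))/(2*n), ?_, by ring⟩
      have harg : (0:ℝ) ≤ n^2 + 4*n*lam := by nlinarith
      have hs := Real.sq_sqrt harg
      have hn0 : n ≠ 0 := ne_of_gt hpos
      field_simp
      rw [show n * (n + 4 * lam) = n ^ 2 + 4 * n * lam by ring]
      nlinarith [hs]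
    · exact ⟨Real.sqrt (-lam - n/4), -1/2,
        by rw [Real.sq_sqrt (by linarith)]; ring, by ring⟩
  · obtain ⟨T, hT1, hT2⟩ : ∃ T : ℝ, 1 ≤ T ∧ lam + mu^2 + n ≤ n * T := by
      refine ⟨max 1 ((lam + mu^2 + n)/n), le_max_left _ _, ?_⟩
      calc lam + mu^2 + n = n * ((lam + mu^2 + n)/n) := by field_simp
        _ ≤ n * max 1 ((lam + mu^2 + n)/n) :=
          mul_le_mul_of_nonneg_left (le_max_right _ _) (le_of_lt hpos)
    have hgT : mu^2 + (lam - n*T - n*T^2)*(2*T+1)^2 ≤ 0 := by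
      have hA : lam - n*T - n*T^2 ≤ -mu^2 := by nlinarith [mul_nonneg (le_of_lt hpos) (sq_nonneg T)]
      have h3 := mul_le_mul_of_nonneg_right hA (sq_nonneg (2*T+1))
      have h4 : (1:ℝ) ≤ (2*T+1)^2 := by nlinarith
      have h5 := mul_le_mul_of_nonneg_left h4 (sq_nonneg mu)
      nlinarith
    have hc : ContinuousOn (fun β : ℝ => mu^2 + (lam - n*β - n*β^2)*(2*β+1)^2)
        (Set.Icc (-1/2) T) := by
      apply Continuous.continuousOn; fun_prop
    have hmem : (0:ℝ) ∈ Set.Icc (mu^2 + (lam - n*T - n*T^2)*(2*T+1)^2)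
        (mu^2 + (lam - n*(-1/2) - n*(-1/2)^2)*(2*(-1/2)+1)^2) := by
      constructor
      · exact hgT
      · norm_num; positivity
    obtain ⟨β, hβmem, hβ0⟩ := intermediate_value_Icc' (by linarith : (-1/2:ℝ) ≤ T) hc hmem
    simp only at hβ0
    have hne : 2*β + 1 ≠ 0 := by
      intro h
      apply hmu
      have : mu^2 = 0 := by
        linear_combination hβ0 - (lam - n*β - n*β^2)*(2*β+1)*h
      exact pow_eq_zero_iff (by norm_num) |>.mp this
    refine ⟨-mu/(2*β+1), β, ?_, by field_simp⟩
    field_simp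
    linear_combination hβ0
end
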